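/- In the setting of the lower-bound construction (m ≥ 2, p = m − 1, ℓ ≥ 1, x_i^j = e_i + j·e_m, X = { x_i^j : i ∈ [p], j ∈ [ℓ] }, C₁ determined by (ℓ₁,…,ℓ_p) ∈ [ℓ]^p, C₂ = X \ C₁): the Euclidean distance between conv(C₁) and conv(C₂) is at least 1/(ℓ√m). -/

import Mathlib

open scoped RealInnerProductSpace

/-- The point `x_i^j = e_i + j • e_m` of the lower-bound construction. -/
noncomputable def xpt (m i j : ℕ) : EuclideanSpace ℝ (Fin m) :=
  WithLp.toLp 2 (fun c : Fin m => (if (c : ℕ) = i then 1 else 0) + (if (c : ℕ) = m - 1 then (j : ℝ) else 0))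

theorem stmt9 (m ℓ : ℕ) (hm : 2 ≤ m) (hℓ : 1 ≤ ℓ)
    (L : ℕ → ℕ) (hL : ∀ i < m - 1, 1 ≤ L i ∧ L i ≤ ℓ) :
    ENNReal.ofReal (1 / (ℓ * Real.sqrt m)) ≤
      ⨅ a ∈ convexHull ℝ {z : EuclideanSpace ℝ (Fin m) |
          ∃ i j : ℕ, i < m - 1 ∧ 1 ≤ j ∧ j ≤ L i ∧ z = xpt m i j},
        ⨅ b ∈ convexHull ℝ {z : EuclideanSpace ℝ (Fin m) |
          ∃ i j : ℕ, i < m - 1 ∧ L i < j ∧ j ≤ ℓ ∧ z = xpt m i j},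
          ENNReal.ofReal (dist a b) := by
  classical
  set u : EuclideanSpace ℝ (Fin m) := WithLp.toLp 2 (fun c : Fin m => if (c : ℕ) = m - 1 then (1:ℝ) else -(L (c : ℕ) : ℝ))
    with hu
  have hm1 : m - 1 < m := by omega
  have hinner : ∀ i j : ℕ, i < m - 1 → ⟪u, xpt m i j⟫ = (j : ℝ) - L i := by
    intro i j hi
    have him : i < m := by omega
    rw [PiLp.inner_apply]
    have h1 : ∀ c : Fin m, ((c : ℕ) = i) = (c = ⟨i, him⟩) := fun c => by
      simp [Fin.ext_iff]
    have h2 : ∀ c : Fin m, ((c : ℕ) = m - 1) = (c = ⟨m - 1, hm1⟩) := fun c => by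
      simp [Fin.ext_iff]
    simp only [xpt, hu, PiLp.toLp_apply, RCLike.inner_apply, starRingEnd_apply, star_trivial, h1, h2, mul_add,
      mul_ite, mul_one, mul_zero, Finset.sum_add_distrib, Finset.sum_ite_eq',
      Finset.mem_univ, if_true]
    have : ((⟨i, him⟩ : Fin m) : ℕ) ≠ m - 1 := by simp; omega
    simp [hu, this]
    have hne : (⟨m - 1, hm1⟩ : Fin m) ≠ ⟨i, him⟩ := by simp [Fin.ext_iff]; omega
    rw [Finset.sum_eq_add ⟨m - 1, hm1⟩ ⟨i, him⟩ hne (fun c _ hc => by simp [hc.1, hc.2])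
      (by simp) (by simp)]
    simp [hne, hne.symm]
    ring
  have hlin : IsLinearMap ℝ (fun z : EuclideanSpace ℝ (Fin m) => ⟪u, z⟫) :=
    ⟨fun x y => inner_add_right u x y, fun c x => real_inner_smul_right u x c⟩
  -- bounds on hull members
  have hA : ∀ a ∈ convexHull ℝ {z : EuclideanSpace ℝ (Fin m) |
      ∃ i j : ℕ, i < m - 1 ∧ 1 ≤ j ∧ j ≤ L i ∧ z = xpt m i j}, ⟪u, a⟫ ≤ 0 := by
    intro a ha
    refine convexHull_min ?_ (convex_halfSpace_le hlin 0) ha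
    rintro z ⟨i, j, hi, hj1, hj2, rfl⟩
    simp only [Set.mem_setOf_eq]
    rw [hinner i j hi]
    have : (j : ℝ) ≤ L i := by exact_mod_cast hj2
    linarith
  have hB : ∀ b ∈ convexHull ℝ {z : EuclideanSpace ℝ (Fin m) |
      ∃ i j : ℕ, i < m - 1 ∧ L i < j ∧ j ≤ ℓ ∧ z = xpt m i j}, 1 ≤ ⟪u, b⟫ := by
    intro b hb
    refine convexHull_min ?_ (convex_halfSpace_ge hlin 1) hb
    rintro z ⟨i, j, hi, hj1, hj2, rfl⟩
    simp only [Set.mem_setOf_eq]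
    rw [hinner i j hi]
    have : (L i : ℝ) + 1 ≤ j := by exact_mod_cast hj1
    linarith
  -- norm bound
  have hmlpos : (0:ℝ) < ℓ * Real.sqrt m := by
    have : (0:ℝ) < Real.sqrt m := Real.sqrt_pos.2 (by positivity)
    have hl : (0:ℝ) < ℓ := by exact_mod_cast hℓ
    positivity
  have hnorm : ‖u‖ ≤ ℓ * Real.sqrt m := by
    rw [EuclideanSpace.norm_eq]
    have hsum : ∑ c : Fin m, ‖u c‖ ^ 2 ≤ (ℓ : ℝ) ^ 2 * m := by
      calc ∑ c : Fin m, ‖u c‖ ^ 2 ≤ ∑ c : Fin m, (ℓ : ℝ) ^ 2 := by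
            apply Finset.sum_le_sum
            intro c _
            by_cases hc : (c : ℕ) = m - 1
            · simp [hu, hc]
              have : (1:ℝ) ≤ (ℓ:ℝ) := by exact_mod_cast hℓ
              nlinarith
            · have hcl : (c : ℕ) < m - 1 := by have := c.isLt; omega
              have hLc : (L (c : ℕ) : ℝ) ≤ ℓ := by exact_mod_cast (hL _ hcl).2
              have h0 : (0:ℝ) ≤ L (c : ℕ) := by positivity
              simp [hu, hc]
              nlinarith
        _ = (ℓ : ℝ) ^ 2 * m := by simp [mul_comm]
    calc Real.sqrt (∑ c : Fin m, ‖u c‖ ^ 2) ≤ Real.sqrt ((ℓ : ℝ) ^ 2 * m) :=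
          Real.sqrt_le_sqrt hsum
      _ = ℓ * Real.sqrt m := by
          rw [Real.sqrt_mul (by positivity), Real.sqrt_sq (by positivity)]
  refine le_iInf₂ fun a ha => le_iInf₂ fun b hb => ENNReal.ofReal_le_ofReal ?_
  have h1 : (1:ℝ) ≤ ⟪u, b - a⟫ := by
    rw [inner_sub_right]
    linarith [hA a ha, hB b hb]
  have h2 : ⟪u, b - a⟫ ≤ ‖u‖ * ‖b - a‖ := real_inner_le_norm u (b - a)
  have h3 : ‖u‖ * ‖b - a‖ ≤ (ℓ * Real.sqrt m) * ‖b - a‖ :=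
    mul_le_mul_of_nonneg_right hnorm (norm_nonneg _)
  have hd : dist a b = ‖b - a‖ := by rw [dist_eq_norm, norm_sub_rev]
  rw [hd, div_le_iff₀ hmlpos, mul_comm]
  linarith
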